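/- Fix t ≥ 1 and real numbers ℓ₁, …, ℓ_t and f. Let w₁, …, w_t ∈ (0,1] with w₁ = 1. For 1 ≤ s ≤ t define w_s^t := w_s ∏_{j=s+1}^{t} (1 − w_j), and set w₀^t := 0. Define f_t := ∑_{s=1}^{t} w_s^t ℓ_s and, for 1 ≤ i ≤ t, F_i := (t − i + 1)⁻¹ ∑_{s=i}^{t} ℓ_s. Then ∑_{s=1}^{t} w_s^t = 1, and f_t − f = ∑_{i=1}^{t} (w_i^t − w_{i−1}^t)(t − i + 1)(F_i − f). -/
import Mathlib

lemma tele (t : ℕ) (P : ℕ → ℝ) :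
    ∑ i ∈ Finset.Icc 1 t, (P i - P (i - 1)) = P t - P 0 := by
  induction t with
  | zero => simp
  | succ t ih =>
    rw [Finset.sum_Icc_succ_top (by omega), ih]
    simp only [Nat.add_sub_cancel]
    ring

lemma abel' (t : ℕ) (A B : ℕ → ℝ) :
    ∑ i ∈ Finset.Icc 1 t, (A i - A (i - 1)) * B i
      = ∑ i ∈ Finset.Icc 1 t, A i * (B i - B (i + 1)) + A t * B (t + 1) - A 0 * B 1 := by
  induction t with
  | zero => simp
  | succ t ih =>
    rw [Finset.sum_Icc_succ_top (by omega), Finset.sum_Icc_succ_top (by omega), ih]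
    simp only [Nat.add_sub_cancel]
    ring

lemma icc_insert (s t : ℕ) (h : s ≤ t) :
    Finset.Icc s t = insert s (Finset.Icc (s + 1) t) := by
  ext x; simp [Finset.mem_Icc]; omega

/-- summation-by-parts identity for weighted empirical averages.
With `w_s^t = w_s ∏_{j=s+1}^t (1 − w_j)`, `w_0^t = 0`, `f_t = ∑_s w_s^t ℓ_s`,
and tail averages `F_i = (t−i+1)⁻¹ ∑_{s=i}^t ℓ_s`, one has `∑_s w_s^t = 1` and
`f_t − f = ∑_{i=1}^t (w_i^t − w_{i−1}^t)(t−i+1)(F_i − f)`. -/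
theorem stmt13 (t : ℕ) (ht : 1 ≤ t) (ℓ : ℕ → ℝ) (f : ℝ)
    (w : ℕ → ℝ) (hw : ∀ s, 1 ≤ s → s ≤ t → 0 < w s ∧ w s ≤ 1) (hw1 : w 1 = 1)
    (wst : ℕ → ℝ) (hwst0 : wst 0 = 0)
    (hwst : ∀ s, 1 ≤ s → s ≤ t → wst s = w s * ∏ j ∈ Finset.Icc (s + 1) t, (1 - w j))
    (ft : ℝ) (hft : ft = ∑ s ∈ Finset.Icc 1 t, wst s * ℓ s)
    (F : ℕ → ℝ)
    (hF : ∀ i, 1 ≤ i → i ≤ t → F i = ((t - i + 1 : ℕ) : ℝ)⁻¹ * ∑ s ∈ Finset.Icc i t, ℓ s) :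
    (∑ s ∈ Finset.Icc 1 t, wst s = 1) ∧
      ft - f = ∑ i ∈ Finset.Icc 1 t,
        (wst i - wst (i - 1)) * ((t - i + 1 : ℕ) : ℝ) * (F i - f) := by
  set P : ℕ → ℝ := fun s => ∏ j ∈ Finset.Icc (s + 1) t, (1 - w j) with hP
  have h1 : ∑ s ∈ Finset.Icc 1 t, wst s = 1 := by
    have key : ∀ s ∈ Finset.Icc 1 t, wst s = P s - P (s - 1) := by
      intro s hs
      rw [Finset.mem_Icc] at hs
      have h1s : s - 1 + 1 = s := by omega
      have : P (s - 1) = (1 - w s) * P s := by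
        rw [hP]
        simp only [h1s]
        rw [icc_insert s t hs.2, Finset.prod_insert (by simp)]
      rw [hwst s hs.1 hs.2, this]
      ring
    rw [Finset.sum_congr rfl key, tele]
    have hPt : P t = 1 := by simp [hP]
    have hP0 : P 0 = 0 := by
      rw [hP]
      apply Finset.prod_eq_zero (i := 1) (by simp [Finset.mem_Icc]; omega)
      rw [hw1]; ring
    rw [hPt, hP0]; ring
  refine ⟨h1, ?_⟩
  set B : ℕ → ℝ := fun i => (∑ s ∈ Finset.Icc i t, ℓ s) - ((t : ℝ) + 1 - i) * f with hB
  have hrw : ∀ i ∈ Finset.Icc 1 t,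
      (wst i - wst (i - 1)) * ((t - i + 1 : ℕ) : ℝ) * (F i - f)
        = (wst i - wst (i - 1)) * B i := by
    intro i hi
    rw [Finset.mem_Icc] at hi
    have hne : ((t - i + 1 : ℕ) : ℝ) ≠ 0 := by
      have : 1 ≤ t - i + 1 := by omega
      positivity
    have hcast : ((t - i + 1 : ℕ) : ℝ) = (t : ℝ) + 1 - i := by
      have : (t - i + 1 : ℕ) = t + 1 - i := by omega
      rw [this, Nat.cast_sub (by omega)]
      push_cast; ring
    have hkey : ((t - i + 1 : ℕ) : ℝ) * (F i - f) = B i := by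
      rw [hF i hi.1 hi.2, hB, mul_sub, ← mul_assoc,
        mul_inv_cancel₀ hne, one_mul, hcast]
    rw [mul_assoc, hkey]
  rw [Finset.sum_congr rfl hrw, abel' t wst B, hwst0]
  have hBt1 : B (t + 1) = 0 := by
    rw [hB]; simp
  have hBd : ∀ i ∈ Finset.Icc 1 t, wst i * (B i - B (i + 1)) = wst i * (ℓ i - f) := by
    intro i hi
    rw [Finset.mem_Icc] at hi
    have hS : ∑ s ∈ Finset.Icc i t, ℓ s = ℓ i + ∑ s ∈ Finset.Icc (i + 1) t, ℓ s := by
      rw [icc_insert i t hi.2, Finset.sum_insert (by simp)]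
    rw [hB]
    simp only [hS]
    push_cast
    ring
  rw [Finset.sum_congr rfl hBd, hBt1]
  have : ∑ i ∈ Finset.Icc 1 t, wst i * (ℓ i - f)
      = (∑ i ∈ Finset.Icc 1 t, wst i * ℓ i) - f * ∑ i ∈ Finset.Icc 1 t, wst i := by
    rw [Finset.mul_sum, ← Finset.sum_sub_distrib]
    apply Finset.sum_congr rfl
    intros; ring
  rw [this, h1, ← hft]
  ring
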